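/- Let E be a real inner product space, let f : E → ℝ be any function, let g : E → ℝ be convex and differentiable, let S ⊆ E be nonempty, and suppose f - g is bounded below on S by some constant B. Let (x_k) be a sequence in S such that for every k, x_{k+1} minimizes the convexified objective x ↦ f(x) - (g(x_k) + ⟪∇g(x_k), x - x_k⟫) over S. Then the sequence of objective values v_k = f(x_k) - g(x_k) is monotone nonincreasing and converges to some limit L ≥ B. -/

import Mathlib

lemma grad_ineq {E : Type*} [NormedAddCommGroup E] [InnerProductSpace ℝ E]
    (g : E → ℝ) (hg_cvx : ConvexOn ℝ Set.univ g) (hg_diff : Differentiable ℝ g)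
    (x y : E) : g x + fderiv ℝ g x (y - x) ≤ g y := by
  have h1 : HasDerivAt (fun t : ℝ => x + t • (y - x)) (y - x) 0 := by
    simpa using ((hasDerivAt_id (0:ℝ)).smul_const (y - x)).const_add x
  have h2 : HasDerivAt (fun t : ℝ => g (x + t • (y - x))) (fderiv ℝ g x (y - x)) 0 := by
    have := ((hg_diff (x + (0:ℝ) • (y - x))).hasFDerivAt.comp_hasDerivAt 0 h1)
    simp only [zero_smul, add_zero] at this
    exact this
  have hφ : ConvexOn ℝ Set.univ (fun t : ℝ => g (x + t • (y - x))) := by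
    have := hg_cvx.comp_affineMap (AffineMap.lineMap x y)
    refine (this.subset (Set.subset_univ _) convex_univ).congr ?_
    intro t _
    show g _ = g _
    congr 1
    rw [AffineMap.lineMap_apply_module]
    module
  have := hφ.le_slope_of_hasDerivAt (Set.mem_univ (0:ℝ)) (Set.mem_univ 1) one_pos h2
  rw [slope_def_field] at this
  simp [map_sub] at this ⊢
  linarith

theorem ccp_objective_values_converge
    {E : Type*} [NormedAddCommGroup E] [InnerProductSpace ℝ E]
    (f : E → ℝ)
    (g : E → ℝ) (hg_cvx : ConvexOn ℝ Set.univ g) (hg_diff : Differentiable ℝ g)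
    (S : Set E) (hS : S.Nonempty)
    (B : ℝ) (hB : ∀ x ∈ S, B ≤ f x - g x)
    (x : ℕ → E) (hxS : ∀ k, x k ∈ S)
    (hmin : ∀ k, ∀ y ∈ S,
      f (x (k + 1)) - (g (x k) + fderiv ℝ g (x k) (x (k + 1) - x k)) ≤
        f y - (g (x k) + fderiv ℝ g (x k) (y - x k))) :
    Antitone (fun k => f (x k) - g (x k)) ∧
      ∃ L : ℝ, B ≤ L ∧
        Filter.Tendsto (fun k => f (x k) - g (x k)) Filter.atTop (nhds L) := by
  have key : ∀ k, f (x (k + 1)) - g (x (k + 1)) ≤ f (x k) - g (x k) := by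
    intro k
    have h1 := hmin k (x k) (hxS k)
    simp only [sub_self, map_zero, add_zero] at h1
    have h2 := grad_ineq g hg_cvx hg_diff (x k) (x (k + 1))
    linarith
  have anti : Antitone (fun k => f (x k) - g (x k)) := antitone_nat_of_succ_le key
  have hbdd : BddBelow (Set.range fun k => f (x k) - g (x k)) :=
    ⟨B, by rintro _ ⟨k, rfl⟩; exact hB _ (hxS k)⟩
  refine ⟨anti, ⨅ k, f (x k) - g (x k), le_ciInf fun k => hB _ (hxS k),
    tendsto_atTop_ciInf anti hbdd⟩
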